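/- Let ψ = C₁ ∧ … ∧ C_r be a Boolean formula in conjunctive normal form over the variables x₁,…,x_k. Then ψ is satisfiable if and only if the reachability game G_ψ is not k-transducer live. -/

import Mathlib

/-- A two-player game arena: Player 1 plays actions from `A` at `V1`-vertices,
Player 2 plays actions from `B` at `V2`-vertices. `F1`/`F2` are the colorings. -/
structure Game (V1 V2 A B : Type) where
  E1 : V1 → A → V2
  E2 : V2 → B → V1
  init : V1
  F1 : V1 → ℕ
  F2 : V2 → ℕ

/-- A finite-state transducer with output alphabet `A`, input alphabet `B`
and state set `M`. -/
structure Transducer (A B M : Type) where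
  start : M
  step : M → B → M
  out : M → A

/-- The transition function extended to input words, starting from state `m`. -/
def Transducer.stepFrom {A B M : Type} (T : Transducer A B M) (m : M) (x : List B) : M :=
  x.foldl T.step m

/-- `L̂ : B* → A`, the output of the transducer after reading an input word. -/
def Transducer.outWord {A B M : Type} (T : Transducer A B M) (x : List B) : A :=
  T.out (T.stepFrom T.start x)

/-- The history (element of `(A×B)*`) consisting of the first `n` rounds of an
infinite word given by `a` and `b`. -/
def hist {A B : Type} (a : ℕ → A) (b : ℕ → B) (n : ℕ) : List (A × B) :=
  (List.range n).map (fun i => (a i, b i))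

/-- The infinite word `a₀b₀a₁b₁…` agrees with the Player-2 strategy `σ`. -/
def AgreesP2 {A B : Type} (σ : List (A × B) → A → B) (a : ℕ → A) (b : ℕ → B) : Prop :=
  ∀ n, b n = σ (hist a b n) (a n)

/-- The infinite word `a₀b₀a₁b₁…` agrees with the Player-1 strategy `τ`. -/
def AgreesP1 {A B : Type} (τ : List (A × B) → A) (a : ℕ → A) (b : ℕ → B) : Prop :=
  ∀ n, a n = τ (hist a b n)

/-- The Player-1 strategy `f_T` induced by a transducer `T`. -/
def Transducer.strat {A B M : Type} (T : Transducer A B M) : List (A × B) → A :=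
  fun h => T.outWord (h.map Prod.snd)

/-- An infinite word agrees with the transducer `T` (for Player 1). -/
def InfAgrees {A B M : Type} (T : Transducer A B M) (a : ℕ → A) (b : ℕ → B) : Prop :=
  AgreesP1 T.strat a b

/-- A finite word in `(A×B)*` agrees with the transducer `T` (for Player 1). -/
def FinAgrees {A B M : Type} (T : Transducer A B M) (w : List (A × B)) : Prop :=
  ∀ i : Fin w.length, (w.get i).1 = T.outWord ((w.take i.val).map Prod.snd)

/-- The infinite word given by `a`, `b` extends the finite word `w`. -/
def ExtendsWord {A B : Type} (w : List (A × B)) (a : ℕ → A) (b : ℕ → B) : Prop :=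
  ∀ i : Fin w.length, a i.val = (w.get i).1 ∧ b i.val = (w.get i).2

/-- The Player-1 vertices `u₀ u₁ u₂ …` of the play generated by the word
`a₀b₀a₁b₁…` from the Player-1 vertex `u0`. -/
def Game.playU {V1 V2 A B : Type} (G : Game V1 V2 A B) (u0 : V1) (a : ℕ → A) (b : ℕ → B) :
    ℕ → V1
  | 0 => u0
  | n + 1 => G.E2 (G.E1 (G.playU u0 a b n) (a n)) (b n)

/-- The sequence of colors `F(u₀) F(v₀) F(u₁) F(v₁) …` along the play generated
by the word `a₀b₀a₁b₁…` from `u0`. -/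
def Game.colorSeq {V1 V2 A B : Type} (G : Game V1 V2 A B) (u0 : V1) (a : ℕ → A) (b : ℕ → B)
    (n : ℕ) : ℕ :=
  if n % 2 = 0 then G.F1 (G.playU u0 a b (n / 2))
  else G.F2 (G.E1 (G.playU u0 a b (n / 2)) (a (n / 2)))

/-- Reachability winning condition for Player 2: some vertex of color 2 occurs. -/
def Game.reachWin {V1 V2 A B : Type} (G : Game V1 V2 A B) (u0 : V1) (a : ℕ → A) (b : ℕ → B) :
    Prop :=
  ∃ n, G.colorSeq u0 a b n = 2

/-- Parity winning condition for Player 2: the largest color occurring infinitely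
often along the play is even. -/
def Game.parityWin {V1 V2 A B : Type} (G : Game V1 V2 A B) (u0 : V1) (a : ℕ → A) (b : ℕ → B) :
    Prop :=
  ∃ c, Even c ∧ {n | G.colorSeq u0 a b n = c}.Infinite ∧
    ∀ d, {n | G.colorSeq u0 a b n = d}.Infinite → d ≤ c

/-- `G` is `k`-transducer live (for the parity winning condition): every finite word
agreeing with some `k`-transducer for Player 1 can be extended to an infinite word that
agrees with some `k`-transducer for Player 1 and whose play is winning for Player 2. -/
def Game.kLiveParity {V1 V2 A B : Type} (G : Game V1 V2 A B) (k : ℕ) : Prop :=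
  ∀ w : List (A × B), (∃ T : Transducer A B (Fin k), FinAgrees T w) →
    ∃ a b, ExtendsWord w a b ∧ (∃ T : Transducer A B (Fin k), InfAgrees T a b) ∧
      G.parityWin G.init a b

/-- `G` is `k`-transducer live (for the reachability winning condition). -/
def Game.kLiveReach {V1 V2 A B : Type} (G : Game V1 V2 A B) (k : ℕ) : Prop :=
  ∀ w : List (A × B), (∃ T : Transducer A B (Fin k), FinAgrees T w) →
    ∃ a b, ExtendsWord w a b ∧ (∃ T : Transducer A B (Fin k), InfAgrees T a b) ∧
      G.reachWin G.init a b

/-- The history of the unique word that agrees with the Player-1 strategy `τ` and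
the Player-2 strategy `σ`. -/
def inducedHist {A B : Type} (τ : List (A × B) → A) (σ : List (A × B) → A → B) :
    ℕ → List (A × B)
  | 0 => []
  | n + 1 =>
      let h := inducedHist τ σ n
      h ++ [(τ h, σ h (τ h))]

/-- The Player-1 actions of the unique word agreeing with `τ` and `σ`. -/
def inducedA {A B : Type} (τ : List (A × B) → A) (σ : List (A × B) → A → B) (n : ℕ) : A :=
  τ (inducedHist τ σ n)

/-- The Player-2 actions of the unique word agreeing with `τ` and `σ`. -/
def inducedB {A B : Type} (τ : List (A × B) → A) (σ : List (A × B) → A → B) (n : ℕ) : B :=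
  σ (inducedHist τ σ n) (inducedA τ σ n)

/-- Player-1 actions in the CNF game: `(i, b)` assigns value `b` to `xᵢ`
(`⊤ᵢ` / `⊥ᵢ`). -/
abbrev CAct1 (k : ℕ) := Fin k × Bool

/-- Player-2 actions: the single dummy action `ε`. -/
abbrev CAct2 : Type := Unit

/-- A clause over `x₁,…,x_k`: `c i b = true` iff the literal asserting that `xᵢ`
has value `b` occurs in the clause. -/
def CClause (k : ℕ) := Fin k → Bool → Bool

/-- The clause `c` is satisfied by the assignment `v`. -/
def CClause.Sat {k : ℕ} (c : CClause k) (v : Fin k → Bool) : Prop :=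
  ∃ i, c i (v i) = true

/-- Satisfiability of the CNF formula `C₁ ∧ … ∧ C_r`. -/
def CNFSat {k r : ℕ} (C : Fin r → CClause k) : Prop :=
  ∃ v : Fin k → Bool, ∀ j : Fin r, (C j).Sat v

/-- Player-1 vertices: Player 1 is about to assign `xᵢ` in stage `j`, the status
flag `β` recording whether `C_j` is already satisfied; plus a Player-1 vertex of each
paradise (`para true` belongs to the Player-2 paradise, `para false` to the
Player-1 paradise). -/
inductive CV1 (k r : ℕ) where
  | node (j : Fin r) (i : Fin k) (β : Bool)
  | para (p : Bool)

/-- Player-2 vertices: the dummy-move vertices after `xᵢ` was assigned in stage `j`,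
plus a Player-2 vertex of each paradise. -/
inductive CV2 (k r : ℕ) where
  | node (j : Fin r) (i : Fin k) (β : Bool)
  | para (p : Bool)

/-- Transitions from Player-1 vertices: the legal action assigning `xᵢ` updates the
status flag; any other action leads to the Player-2 paradise. -/
def cnfE1 {k r : ℕ} (C : Fin r → CClause k) : CV1 k r → CAct1 k → CV2 k r
  | .node j i β, (i', bv) => if i' = i then .node j i (β || C j i bv) else .para true
  | .para p, _ => .para p

/-- Transitions from Player-2 vertices (via the dummy move): proceed to the next
variable; at the end of stage `j`, status `⊥` leads to the Player-2 paradise,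
status `⊤` leads to stage `j+1`, or to the Player-1 paradise after the last stage. -/
def cnfE2 {k r : ℕ} (C : Fin r → CClause k) : CV2 k r → CAct2 → CV1 k r
  | .node j i β, _ =>
      if h : (i : ℕ) + 1 < k then .node j ⟨(i : ℕ) + 1, h⟩ β
      else if β = true then
        if hj : (j : ℕ) + 1 < r then .node ⟨(j : ℕ) + 1, hj⟩ ⟨0, i.pos⟩ false
        else .para false
      else .para true
  | .para p, _ => .para p

/-- Coloring: the Player-2 paradise has color 2, all other vertices color 1. -/
def cnfF1 {k r : ℕ} : CV1 k r → ℕ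
  | .para true => 2
  | _ => 1

def cnfF2 {k r : ℕ} : CV2 k r → ℕ
  | .para true => 2
  | _ => 1

/-- The reachability game `G_ψ` for the CNF formula with clauses `C`. -/
def cnfGame {k r : ℕ} (hk : 0 < k) (hr : 0 < r) (C : Fin r → CClause k) :
    Game (CV1 k r) (CV2 k r) (CAct1 k) CAct2 where
  E1 := cnfE1 C
  E2 := cnfE2 C
  init := .node ⟨0, hr⟩ ⟨0, hk⟩ false
  F1 := cnfF1
  F2 := cnfF2


section CNFHelpers

/-! ### Generic helper lemmas -/

lemma list_unit_eq_replicate (l : List Unit) : l = List.replicate l.length () := by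
  induction l with
  | nil => rfl
  | cons h t ih => simp [List.replicate_succ]; exact ih

/-- The one-step transition of a transducer with `Unit` input alphabet. -/
def Transducer.ustep {A M : Type} (T : Transducer A Unit M) : M → M := fun m => T.step m ()

lemma stepFrom_replicate {A M : Type} (T : Transducer A Unit M) (n : ℕ) :
    T.stepFrom T.start (List.replicate n ()) = T.ustep^[n] T.start := by
  induction n with
  | zero => rfl
  | succ n ih =>
      rw [List.replicate_succ', Transducer.stepFrom, List.foldl_append,
        Function.iterate_succ_apply']
      rw [Transducer.stepFrom] at ih
      rw [ih]; rfl

/-- The canonical output sequence of a transducer with `Unit` inputs. -/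
def canonA {A M : Type} (T : Transducer A Unit M) (n : ℕ) : A :=
  T.out (T.ustep^[n] T.start)

lemma outWord_units {A M : Type} (T : Transducer A Unit M) (l : List Unit) :
    T.outWord l = canonA T l.length := by
  calc T.outWord l = T.outWord (List.replicate l.length ()) := by
        rw [← list_unit_eq_replicate]
    _ = _ := by rw [Transducer.outWord, stepFrom_replicate]; rfl

lemma succ_mod_lt {k n : ℕ} (h : n % k + 1 < k) :
    (n + 1) % k = n % k + 1 ∧ (n + 1) / k = n / k := by
  have h0 : 0 < k := by omega
  have e : n + 1 = (n % k + 1) + k * (n / k) := by have := Nat.mod_add_div n k; omega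
  constructor
  · rw [e, Nat.add_mul_mod_self_left, Nat.mod_eq_of_lt h]
  · rw [e, Nat.add_mul_div_left _ _ h0, Nat.div_eq_of_lt h, Nat.zero_add]

lemma succ_mod_eq {k n : ℕ} (hk : 0 < k) (h : n % k + 1 = k) :
    (n + 1) % k = 0 ∧ (n + 1) / k = n / k + 1 := by
  have e : n + 1 = k * (n / k + 1) := by
    have := Nat.mod_add_div n k; linarith [Nat.mul_add k (n / k) 1, Nat.mul_one k]
  constructor
  · rw [e, Nat.mul_mod_right]
  · rw [e, Nat.mul_div_cancel_left _ hk]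

lemma stage_mod_div {k : ℕ} (j i : ℕ) (hk : 0 < k) (hi : i < k) :
    (j * k + i) % k = i ∧ (j * k + i) / k = j := by
  constructor
  · rw [Nat.mul_add_mod', Nat.mod_eq_of_lt hi]
  · rw [show j * k + i = i + j * k by ring, Nat.add_mul_div_right _ _ hk,
      Nat.div_eq_of_lt hi, Nat.zero_add]

lemma stage_lt {k r : ℕ} (j i : ℕ) (hj : j < r) (hi : i < k) : j * k + i < r * k :=
  calc j * k + i < (j + 1) * k := by rw [Nat.add_mul, Nat.one_mul]; omega
    _ ≤ r * k := Nat.mul_le_mul_right k hj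

/-! ### Game unfolding lemmas -/

lemma playU_zero {V1 V2 A B : Type} (G : Game V1 V2 A B) (u0 : V1) (a : ℕ → A) (b : ℕ → B) :
    G.playU u0 a b 0 = u0 := rfl

lemma playU_succ {V1 V2 A B : Type} (G : Game V1 V2 A B) (u0 : V1) (a : ℕ → A) (b : ℕ → B)
    (n : ℕ) : G.playU u0 a b (n + 1) = G.E2 (G.E1 (G.playU u0 a b n) (a n)) (b n) := rfl

lemma playU_congr {V1 V2 A B : Type} (G : Game V1 V2 A B) (u0 : V1) (a a' : ℕ → A)
    (b b' : ℕ → B) : ∀ n, (∀ i, i < n → a i = a' i ∧ b i = b' i) →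
    G.playU u0 a b n = G.playU u0 a' b' n := by
  intro n
  induction n with
  | zero => intro _; rfl
  | succ n ih =>
      intro h
      rw [playU_succ, playU_succ, ih (fun i hi => h i (by omega)),
        (h n (by omega)).1, (h n (by omega)).2]

lemma colorSeq_even {V1 V2 A B : Type} (G : Game V1 V2 A B) (u0 : V1) (a : ℕ → A) (b : ℕ → B)
    (m : ℕ) : G.colorSeq u0 a b (2 * m) = G.F1 (G.playU u0 a b m) := by
  rw [Game.colorSeq, if_pos (by omega : 2 * m % 2 = 0), show 2 * m / 2 = m by omega]

lemma colorSeq_odd {V1 V2 A B : Type} (G : Game V1 V2 A B) (u0 : V1) (a : ℕ → A) (b : ℕ → B)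
    (m : ℕ) :
    G.colorSeq u0 a b (2 * m + 1) = G.F2 (G.E1 (G.playU u0 a b m) (a (m))) := by
  rw [Game.colorSeq, if_neg (by omega : ¬ (2 * m + 1) % 2 = 0),
    show (2 * m + 1) / 2 = m by omega]

/-! ### CNF game unfolding lemmas -/

variable {k r : ℕ}

lemma cnfGame_E1 (hk : 0 < k) (hr : 0 < r) (C : Fin r → CClause k) :
    (cnfGame hk hr C).E1 = cnfE1 C := rfl

lemma cnfGame_E2 (hk : 0 < k) (hr : 0 < r) (C : Fin r → CClause k) :
    (cnfGame hk hr C).E2 = cnfE2 C := rfl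

lemma cnfGame_init (hk : 0 < k) (hr : 0 < r) (C : Fin r → CClause k) :
    (cnfGame hk hr C).init = .node ⟨0, hr⟩ ⟨0, hk⟩ false := rfl

lemma cnfGame_F1 (hk : 0 < k) (hr : 0 < r) (C : Fin r → CClause k) :
    (cnfGame hk hr C).F1 = cnfF1 := rfl

lemma cnfGame_F2 (hk : 0 < k) (hr : 0 < r) (C : Fin r → CClause k) :
    (cnfGame hk hr C).F2 = cnfF2 := rfl

lemma cnfE1_node (C : Fin r → CClause k) (j : Fin r) (i : Fin k) (β : Bool) (x : CAct1 k) :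
    cnfE1 C (.node j i β) x =
      if x.1 = i then .node j i (β || C j i x.2) else .para true := by
  cases x; rfl

lemma cnfE1_para (C : Fin r → CClause k) (p : Bool) (x : CAct1 k) :
    cnfE1 C (.para p) x = .para p := by cases x; rfl

lemma cnfE2_node (C : Fin r → CClause k) (j : Fin r) (i : Fin k) (β : Bool) (x : CAct2) :
    cnfE2 C (.node j i β) x =
      if h : (i : ℕ) + 1 < k then .node j ⟨(i : ℕ) + 1, h⟩ β
      else if β = true then
        if hj : (j : ℕ) + 1 < r then .node ⟨(j : ℕ) + 1, hj⟩ ⟨0, i.pos⟩ false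
        else .para false
      else .para true := rfl

lemma cnfE2_para (C : Fin r → CClause k) (p : Bool) (x : CAct2) :
    cnfE2 C (.para p) x = .para p := rfl

lemma cnfF1_node (j : Fin r) (i : Fin k) (β : Bool) : cnfF1 (.node j i β) = 1 := rfl
lemma cnfF1_paraFalse : cnfF1 (k := k) (r := r) (.para false) = 1 := rfl
lemma cnfF2_node (j : Fin r) (i : Fin k) (β : Bool) : cnfF2 (.node j i β) = 1 := rfl
lemma cnfF2_paraFalse : cnfF2 (k := k) (r := r) (.para false) = 1 := rfl

end CNFHelpers


section UnsatDirection

variable {k r : ℕ}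

lemma eq_paraT_of_cnfF1 {u : CV1 k r} (h : cnfF1 u = 2) : u = .para true := by
  cases u with
  | node j i β => simp [cnfF1_node] at h
  | para p =>
      cases p with
      | false => simp [cnfF1_paraFalse] at h
      | true => rfl

lemma eq_paraT_of_cnfF2 {u : CV2 k r} (h : cnfF2 u = 2) : u = .para true := by
  cases u with
  | node j i β => simp [cnfF2_node] at h
  | para p =>
      cases p with
      | false => simp [cnfF2_paraFalse] at h
      | true => rfl

/-- Legality: if the play is at a node and Player 1's action does not match the
current variable index, the next vertex is the Player-2 paradise. -/
lemma legal_of_not_para (hk : 0 < k) (hr : 0 < r) (C : Fin r → CClause k)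
    (a : ℕ → CAct1 k) (b : ℕ → CAct2)
    (hF2 : ∀ m, cnfE1 C ((cnfGame hk hr C).playU (cnfGame hk hr C).init a b m) (a m)
      ≠ .para true)
    (n : ℕ) (J : Fin r) (I : Fin k) (β : Bool)
    (hu : (cnfGame hk hr C).playU (cnfGame hk hr C).init a b n = .node J I β) :
    (a n).1 = I := by
  by_contra hne
  apply hF2 n
  rw [hu, cnfE1_node, if_neg hne]

/-- Structure of a play that never reaches the Player-2 paradise. -/
lemma unsat_struct (hk : 0 < k) (hr : 0 < r) (C : Fin r → CClause k)
    (a : ℕ → CAct1 k) (b : ℕ → CAct2)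
    (hF1 : ∀ m, (cnfGame hk hr C).playU (cnfGame hk hr C).init a b m ≠ .para true)
    (hF2 : ∀ m, cnfE1 C ((cnfGame hk hr C).playU (cnfGame hk hr C).init a b m) (a m)
      ≠ .para true)
    (n : ℕ) (hn : n < r * k) :
    ∃ β : Bool,
      (cnfGame hk hr C).playU (cnfGame hk hr C).init a b n
        = .node ⟨n / k, (Nat.div_lt_iff_lt_mul hk).mpr hn⟩ ⟨n % k, Nat.mod_lt n hk⟩ β ∧
      (β = true → ∃ (i' : ℕ) (h' : i' < n % k),
        C ⟨n / k, (Nat.div_lt_iff_lt_mul hk).mpr hn⟩ ⟨i', h'.trans (Nat.mod_lt n hk)⟩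
          ((a (n / k * k + i')).2) = true) := by
  induction n with
  | zero =>
      refine ⟨false, ?_, by simp⟩
      rw [playU_zero, cnfGame_init]
      simp
  | succ n ih =>
      have hn' : n < r * k := by omega
      obtain ⟨β, hu, hβ⟩ := ih hn'
      have hleg : (a n).1 = (⟨n % k, Nat.mod_lt n hk⟩ : Fin k) :=
        legal_of_not_para hk hr C a b hF2 n _ _ _ hu
      have hE1 : cnfE1 C ((cnfGame hk hr C).playU (cnfGame hk hr C).init a b n) (a n)
          = .node ⟨n / k, (Nat.div_lt_iff_lt_mul hk).mpr hn'⟩ ⟨n % k, Nat.mod_lt n hk⟩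
            (β || C ⟨n / k, (Nat.div_lt_iff_lt_mul hk).mpr hn'⟩ ⟨n % k, Nat.mod_lt n hk⟩
              (a n).2) := by
        rw [hu, cnfE1_node, if_pos hleg]
      have hstep : (cnfGame hk hr C).playU (cnfGame hk hr C).init a b (n + 1)
          = cnfE2 C (.node ⟨n / k, (Nat.div_lt_iff_lt_mul hk).mpr hn'⟩
              ⟨n % k, Nat.mod_lt n hk⟩
              (β || C ⟨n / k, (Nat.div_lt_iff_lt_mul hk).mpr hn'⟩ ⟨n % k, Nat.mod_lt n hk⟩
                (a n).2)) (b n) := by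
        rw [playU_succ, cnfGame_E2, cnfGame_E1, hE1]
      rw [cnfE2_node] at hstep
      by_cases hlt : n % k + 1 < k
      · obtain ⟨hm, hd⟩ := succ_mod_lt hlt
        rw [dif_pos hlt] at hstep
        refine ⟨β || C ⟨n / k, (Nat.div_lt_iff_lt_mul hk).mpr hn'⟩ ⟨n % k, Nat.mod_lt n hk⟩
          (a n).2, ?_, ?_⟩
        · rw [hstep]
          simp [hm, hd]
        · intro hb
          rcases Bool.or_eq_true_iff.mp hb with h1 | h2
          · obtain ⟨i', h', hc⟩ := hβ h1
            refine ⟨i', by rw [hm]; omega, ?_⟩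
            simp only [hd]
            exact hc
          · refine ⟨n % k, by rw [hm]; omega, ?_⟩
            simp only [hd]
            rw [Nat.div_add_mod']
            exact h2
      · have hke : n % k + 1 = k := by have := Nat.mod_lt n hk; omega
        obtain ⟨hm, hd⟩ := succ_mod_eq hk hke
        rw [dif_neg hlt] at hstep
        have hβ' : (β || C ⟨n / k, (Nat.div_lt_iff_lt_mul hk).mpr hn'⟩
            ⟨n % k, Nat.mod_lt n hk⟩ (a n).2) = true := by
          by_contra hbf
          rw [Bool.not_eq_true] at hbf
          rw [hbf] at hstep
          simp only [Bool.false_eq_true, if_false] at hstep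
          exact hF1 (n + 1) hstep
        rw [if_pos hβ'] at hstep
        have hjlt : n / k + 1 < r := by
          have h2 : (n + 1) / k < r := (Nat.div_lt_iff_lt_mul hk).mpr hn
          rw [hd] at h2
          exact h2
        rw [dif_pos hjlt] at hstep
        refine ⟨false, ?_, by simp⟩
        rw [hstep]
        simp [hm, hd]

/-- Each stage of a paradise-free play yields a satisfied clause. -/
lemma unsat_stage (hk : 0 < k) (hr : 0 < r) (C : Fin r → CClause k)
    (a : ℕ → CAct1 k) (b : ℕ → CAct2)
    (hF1 : ∀ m, (cnfGame hk hr C).playU (cnfGame hk hr C).init a b m ≠ .para true)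
    (hF2 : ∀ m, cnfE1 C ((cnfGame hk hr C).playU (cnfGame hk hr C).init a b m) (a m)
      ≠ .para true)
    (j : ℕ) (hj : j < r) :
    ∃ i : Fin k, C ⟨j, hj⟩ i ((a (j * k + (i : ℕ))).2) = true := by
  have hk1 : k - 1 < k := by omega
  have hnlt : j * k + (k - 1) < r * k := stage_lt j (k - 1) hj hk1
  obtain ⟨hm, hd⟩ := stage_mod_div j (k - 1) hk hk1
  obtain ⟨β, hu, hβ⟩ := unsat_struct hk hr C a b hF1 hF2 (j * k + (k - 1)) hnlt
  set n := j * k + (k - 1) with hndef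
  have hleg : (a n).1 = (⟨n % k, Nat.mod_lt n hk⟩ : Fin k) :=
    legal_of_not_para hk hr C a b hF2 n _ _ _ hu
  have hstep : (cnfGame hk hr C).playU (cnfGame hk hr C).init a b (n + 1)
      = cnfE2 C (.node ⟨n / k, (Nat.div_lt_iff_lt_mul hk).mpr hnlt⟩
          ⟨n % k, Nat.mod_lt n hk⟩
          (β || C ⟨n / k, (Nat.div_lt_iff_lt_mul hk).mpr hnlt⟩ ⟨n % k, Nat.mod_lt n hk⟩
            (a n).2)) (b n) := by
    rw [playU_succ, cnfGame_E2, cnfGame_E1, hu, cnfE1_node, if_pos hleg]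
  rw [cnfE2_node] at hstep
  have hnot : ¬ (n % k + 1 < k) := by rw [hm]; omega
  rw [dif_neg hnot] at hstep
  have hβ' : (β || C ⟨n / k, (Nat.div_lt_iff_lt_mul hk).mpr hnlt⟩
      ⟨n % k, Nat.mod_lt n hk⟩ (a n).2) = true := by
    by_contra hbf
    rw [Bool.not_eq_true] at hbf
    rw [hbf] at hstep
    simp only [Bool.false_eq_true, if_false] at hstep
    exact hF1 (n + 1) hstep
  rcases Bool.or_eq_true_iff.mp hβ' with h1 | h2
  · obtain ⟨i', h', hc⟩ := hβ h1
    refine ⟨⟨i', h'.trans (Nat.mod_lt n hk)⟩, ?_⟩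
    have hd' : (j * k + (k - 1)) / k = j := hd
    simp only [hd, hd'] at hc ⊢
    exact hc
  · refine ⟨⟨n % k, Nat.mod_lt n hk⟩, ?_⟩
    simp only [hd] at h2 ⊢
    have : j * k + (⟨n % k, Nat.mod_lt n hk⟩ : Fin k).val = n := by
      simp only [hm]
      exact hndef.symm
    rw [this]
    exact h2

end UnsatDirection


lemma live_of_unsat {k r : ℕ} (hk : 0 < k) (hr : 0 < r) (C : Fin r → CClause k)
    (hunsat : ¬ CNFSat C) : (cnfGame hk hr C).kLiveReach k := by
  intro w hw
  obtain ⟨T, hT⟩ := hw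
  refine ⟨canonA T, fun _ => (), ?_, ⟨T, ?_⟩, ?_⟩
  · -- ExtendsWord
    intro i
    refine ⟨?_, Subsingleton.elim _ _⟩
    rw [hT i, outWord_units]
    congr 1
    have := i.isLt
    simp only [List.length_map, List.length_take]
    omega
  · -- InfAgrees
    intro n
    show canonA T n = T.outWord ((hist (canonA T) (fun _ => ()) n).map Prod.snd)
    rw [outWord_units]
    congr 1
    simp [hist]
  · -- reachWin
    by_contra hno
    rw [Game.reachWin] at hno
    push_neg at hno
    have hF1 : ∀ m, (cnfGame hk hr C).playU (cnfGame hk hr C).init (canonA T) (fun _ => ()) m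
        ≠ .para true := by
      intro m hcon
      have h := hno (2 * m)
      rw [colorSeq_even, hcon, cnfGame_F1] at h
      exact h rfl
    have hF2 : ∀ m, cnfE1 C
        ((cnfGame hk hr C).playU (cnfGame hk hr C).init (canonA T) (fun _ => ()) m)
        (canonA T m) ≠ .para true := by
      intro m hcon
      have h := hno (2 * m + 1)
      rw [colorSeq_odd, cnfGame_F2, cnfGame_E1, hcon] at h
      exact h rfl
    have hlegal : ∀ n, n < r * k → ((canonA T n).1 : ℕ) = n % k := by
      intro n hn
      obtain ⟨β, hu, _⟩ := unsat_struct hk hr C _ _ hF1 hF2 n hn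
      have := legal_of_not_para hk hr C _ _ hF2 n _ _ _ hu
      rw [this]
    have hshift : ∀ (j' : ℕ), j' < r → ∀ i', i' < k →
        T.ustep^[j' * k + i'] T.start = T.ustep^[i'] T.start := by
      intro j'
      induction j' with
      | zero => intro _ i' _; rw [Nat.zero_mul, Nat.zero_add]
      | succ j' ihj =>
          intro hj' i' hi'
          have hsk : T.ustep^[k] T.start = T.start := by
            obtain ⟨m1, m2, hne, heq⟩ := Fintype.exists_ne_map_eq_of_card_lt
              (fun m : Fin (k + 1) => T.ustep^[(m : ℕ)] T.start) (by simp)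
            have key : ∀ p q : ℕ, p < q → q ≤ k →
                T.ustep^[p] T.start = T.ustep^[q] T.start →
                T.ustep^[k] T.start = T.start := by
              intro p q hpq hqk hs
              have hkrk : k < r * k := by
                calc k = 1 * k := (Nat.one_mul k).symm
                _ < r * k := by
                    apply (Nat.mul_lt_mul_right hk).mpr
                    omega
              have hp : p < r * k := by omega
              have hq : q < r * k := by omega
              have hout : (canonA T p).1 = (canonA T q).1 := by rw [canonA, canonA, hs]
              have e1 := hlegal p hp
              have e2 := hlegal q hq
              have hmm : p % k = q % k := by rw [← e1, ← e2, hout]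
              have hpk : p < k := by omega
              rcases Nat.lt_or_ge q k with hq' | hq'
              · exfalso
                rw [Nat.mod_eq_of_lt hpk, Nat.mod_eq_of_lt hq'] at hmm
                omega
              · have hqek : q = k := by omega
                rw [Nat.mod_eq_of_lt hpk, hqek, Nat.mod_self] at hmm
                rw [hqek] at hs
                rw [← hs, hmm]
                rfl
            have h1 := m1.isLt
            have h2 := m2.isLt
            have hvne : (m1 : ℕ) ≠ (m2 : ℕ) := fun h => hne (Fin.ext h)
            rcases Nat.lt_or_ge (m1 : ℕ) (m2 : ℕ) with h | h
            · exact key m1 m2 h (by omega) heq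
            · exact key m2 m1 (by omega) (by omega) heq.symm
          have e : (j' + 1) * k + i' = (j' * k + i') + k := by ring
          rw [e, Function.iterate_add_apply, hsk]
          exact ihj (by omega) i' hi'
    apply hunsat
    refine ⟨fun i => (canonA T (i : ℕ)).2, ?_⟩
    intro j
    obtain ⟨i, hi⟩ := unsat_stage hk hr C (canonA T) (fun _ => ()) hF1 hF2 j.val j.isLt
    have hs_eq : T.ustep^[j.val * k + (i : ℕ)] T.start = T.ustep^[(i : ℕ)] T.start :=
      hshift j.val j.isLt (i : ℕ) i.isLt
    have hval : (canonA T (j.val * k + (i : ℕ))).2 = (canonA T (i : ℕ)).2 := by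
      rw [canonA, canonA, hs_eq]
    rw [hval] at hi
    exact ⟨i, by simpa using hi⟩


section SatDirection

/-- Player 1's actions when playing a fixed satisfying assignment `v` cyclically. -/
def satA {k : ℕ} (hk : 0 < k) (v : Fin k → Bool) (n : ℕ) : CAct1 k :=
  (⟨n % k, Nat.mod_lt n hk⟩, v ⟨n % k, Nat.mod_lt n hk⟩)

/-- The `k`-state transducer playing the assignment `v` cyclically. -/
def satT {k : ℕ} (hk : 0 < k) (v : Fin k → Bool) : Transducer (CAct1 k) CAct2 (Fin k) where
  start := ⟨0, hk⟩
  step m _ := ⟨((m : ℕ) + 1) % k, Nat.mod_lt _ hk⟩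
  out m := (m, v m)

lemma satT_state {k : ℕ} (hk : 0 < k) (v : Fin k → Bool) (n : ℕ) :
    (satT hk v).ustep^[n] (satT hk v).start = ⟨n % k, Nat.mod_lt n hk⟩ := by
  induction n with
  | zero => simp [satT]
  | succ n ih =>
      rw [Function.iterate_succ_apply', ih]
      apply Fin.ext
      show (n % k + 1) % k = (n + 1) % k
      conv_lhs => rw [Nat.add_mod]
      conv_rhs => rw [Nat.add_mod]
      rw [Nat.mod_mod_of_dvd _ dvd_rfl]

lemma satT_canonA {k : ℕ} (hk : 0 < k) (v : Fin k → Bool) (n : ℕ) :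
    canonA (satT hk v) n = satA hk v n := by
  rw [canonA, satT_state]
  rfl

/-- The status flag of the intended play at time `n`. -/
def stb {k r : ℕ} (hr : 0 < r) (C : Fin r → CClause k) (v : Fin k → Bool) (n : ℕ) : Bool :=
  decide (∃ i' : Fin k, (i' : ℕ) < n % k ∧ C ⟨n / k % r, Nat.mod_lt _ hr⟩ i' (v i') = true)

/-- The intended play when Player 1 plays a satisfying assignment cyclically. -/
def satPlay {k r : ℕ} (hk : 0 < k) (hr : 0 < r) (C : Fin r → CClause k) (v : Fin k → Bool)
    (n : ℕ) : CV1 k r :=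
  if n < r * k then
    .node ⟨n / k % r, Nat.mod_lt _ hr⟩ ⟨n % k, Nat.mod_lt n hk⟩ (stb hr C v n)
  else .para false

lemma satPlay_eq {k r : ℕ} (hk : 0 < k) (hr : 0 < r) (C : Fin r → CClause k)
    (v : Fin k → Bool) (hv : ∀ j, (C j).Sat v) (n : ℕ) :
    (cnfGame hk hr C).playU (cnfGame hk hr C).init (satA hk v) (fun _ => ()) n
      = satPlay hk hr C v n := by
  induction n with
  | zero =>
      rw [playU_zero, cnfGame_init, satPlay, if_pos (Nat.mul_pos hr hk)]
      simp [stb]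
  | succ n ih =>
      rw [playU_succ, cnfGame_E1, cnfGame_E2, ih]
      by_cases hn : n < r * k
      · have hjr : n / k % r = n / k := Nat.mod_eq_of_lt ((Nat.div_lt_iff_lt_mul hk).mpr hn)
        rw [satPlay, if_pos hn, cnfE1_node,
          if_pos (show (satA hk v n).1 = ⟨n % k, Nat.mod_lt n hk⟩ from rfl),
          show (satA hk v n).2 = v ⟨n % k, Nat.mod_lt n hk⟩ from rfl]
        rw [cnfE2_node]
        by_cases hlt : n % k + 1 < k
        · obtain ⟨hm, hd⟩ := succ_mod_lt hlt
          rw [dif_pos hlt]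
          have hn1 : n + 1 < r * k := by
            rcases Nat.lt_or_eq_of_le (Nat.succ_le_of_lt hn) with h | h
            · exact h
            · exfalso
              have : (n + 1) % k = 0 := by rw [show n + 1 = r * k by omega, Nat.mul_mod_left]
              omega
          rw [satPlay, if_pos hn1]
          have hstb : stb hr C v (n + 1)
              = (stb hr C v n || C ⟨n / k % r, Nat.mod_lt _ hr⟩ ⟨n % k, Nat.mod_lt n hk⟩
                  (v ⟨n % k, Nat.mod_lt n hk⟩)) := by
            rw [stb, stb, hm]
            simp only [hd]
            have hiff : (∃ i' : Fin k, (i' : ℕ) < n % k + 1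
                  ∧ C ⟨n / k % r, Nat.mod_lt _ hr⟩ i' (v i') = true)
                ↔ ((∃ i' : Fin k, (i' : ℕ) < n % k
                    ∧ C ⟨n / k % r, Nat.mod_lt _ hr⟩ i' (v i') = true)
                  ∨ C ⟨n / k % r, Nat.mod_lt _ hr⟩ ⟨n % k, Nat.mod_lt n hk⟩
                      (v ⟨n % k, Nat.mod_lt n hk⟩) = true) := by
              constructor
              · rintro ⟨i', hlt', hc⟩
                rcases Nat.lt_or_ge (i' : ℕ) (n % k) with h' | h'
                · exact Or.inl ⟨i', h', hc⟩
                · have : i' = (⟨n % k, Nat.mod_lt n hk⟩ : Fin k) :=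
                    Fin.ext (show (i' : ℕ) = n % k by omega)
                  rw [this] at hc
                  exact Or.inr hc
              · rintro (⟨i', hlt', hc⟩ | hc)
                · exact ⟨i', by omega, hc⟩
                · exact ⟨⟨n % k, Nat.mod_lt n hk⟩, by simp, hc⟩
            rw [Bool.eq_iff_iff]
            simp only [decide_eq_true_eq, Bool.or_eq_true]
            exact hiff
          rw [hstb]
          simp [hm, hd]
        · have hke : n % k + 1 = k := by have := Nat.mod_lt n hk; omega
          obtain ⟨hm, hd⟩ := succ_mod_eq hk hke
          rw [dif_neg hlt]
          have hsat : (stb hr C v n || C ⟨n / k % r, Nat.mod_lt _ hr⟩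
              ⟨n % k, Nat.mod_lt n hk⟩ (v ⟨n % k, Nat.mod_lt n hk⟩)) = true := by
            obtain ⟨i, hi⟩ := hv ⟨n / k % r, Nat.mod_lt _ hr⟩
            rcases Nat.lt_or_ge (i : ℕ) (n % k) with h' | h'
            · rw [Bool.or_eq_true_iff]
              left
              rw [stb]
              exact decide_eq_true ⟨i, h', hi⟩
            · have hilt := i.isLt
              have : i = (⟨n % k, Nat.mod_lt n hk⟩ : Fin k) :=
                Fin.ext (show (i : ℕ) = n % k by omega)
              rw [this] at hi
              rw [Bool.or_eq_true_iff]
              exact Or.inr hi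
          rw [if_pos hsat]
          by_cases hjlt : n / k + 1 < r
          · rw [dif_pos (show (⟨n / k % r, Nat.mod_lt _ hr⟩ : Fin r).val + 1 < r by
              show n / k % r + 1 < r; rw [hjr]; exact hjlt)]
            have hn1 : n + 1 < r * k := (Nat.div_lt_iff_lt_mul hk).mp (by rw [hd]; exact hjlt)
            rw [satPlay, if_pos hn1]
            have hstb1 : stb hr C v (n + 1) = false := by
              rw [stb, hm]
              simp
            rw [hstb1]
            simp [hm, hd, hjr, Nat.mod_eq_of_lt hjlt]
          · rw [dif_neg (show ¬ ((⟨n / k % r, Nat.mod_lt _ hr⟩ : Fin r).val + 1 < r) by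
              show ¬ (n / k % r + 1 < r); rw [hjr]; exact hjlt)]
            have hn1 : ¬ (n + 1 < r * k) := by
              intro hcon
              have := (Nat.div_lt_iff_lt_mul hk).mpr hcon
              rw [hd] at this
              exact hjlt this
            rw [satPlay, if_neg hn1]
      · rw [satPlay, if_neg hn, cnfE1_para, cnfE2_para, satPlay,
          if_neg (by omega : ¬ (n + 1 < r * k))]

end SatDirection


lemma not_live_of_sat {k r : ℕ} (hk : 0 < k) (hr : 0 < r) (C : Fin r → CClause k)
    (hsat : CNFSat C) : ¬ (cnfGame hk hr C).kLiveReach k := by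
  obtain ⟨v, hv⟩ := hsat
  intro hlive
  have hlen : (hist (satA hk v) (fun _ => ()) (r * k)).length = r * k := by simp [hist]
  have hget : ∀ i : Fin (hist (satA hk v) (fun _ => ()) (r * k)).length,
      (hist (satA hk v) (fun _ => ()) (r * k)).get i = (satA hk v i.val, ()) := by
    intro i
    rw [List.get_eq_getElem]
    simp [hist]
  have hfin : FinAgrees (satT hk v) (hist (satA hk v) (fun _ => ()) (r * k)) := by
    intro i
    rw [hget i, outWord_units, satT_canonA]
    show satA hk v i.val = satA hk v _
    congr 1
    have h := i.isLt
    simp only [List.length_map, List.length_take]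
    omega
  obtain ⟨a', b', hext, -, hwin⟩ := hlive (hist (satA hk v) (fun _ => ()) (r * k))
    ⟨satT hk v, hfin⟩
  have hpre : ∀ i, i < r * k → satA hk v i = a' i := by
    intro i hi
    have hfi : i < (hist (satA hk v) (fun _ => ()) (r * k)).length := by rw [hlen]; omega
    have h := (hext ⟨i, hfi⟩).1
    rw [hget ⟨i, hfi⟩] at h
    exact h.symm
  have h1 : ∀ m, m ≤ r * k →
      (cnfGame hk hr C).playU (cnfGame hk hr C).init a' b' m = satPlay hk hr C v m := by
    intro m hm
    have hcongr := playU_congr (cnfGame hk hr C) (cnfGame hk hr C).init (satA hk v) a'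
      (fun _ => ()) b' m (fun i hi => ⟨hpre i (by omega), Subsingleton.elim _ _⟩)
    rw [← hcongr, satPlay_eq hk hr C v hv]
  have h2 : ∀ m, r * k ≤ m →
      (cnfGame hk hr C).playU (cnfGame hk hr C).init a' b' m = .para false := by
    intro m hm
    induction m, hm using Nat.le_induction with
    | base =>
        rw [h1 (r * k) le_rfl, satPlay, if_neg (lt_irrefl _)]
    | succ m hm ih =>
        rw [playU_succ, cnfGame_E1, cnfGame_E2, ih, cnfE1_para, cnfE2_para]
  obtain ⟨n, hcol⟩ := hwin
  simp only [Game.colorSeq, cnfGame_F1, cnfGame_F2, cnfGame_E1] at hcol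
  split at hcol
  · rcases lt_or_ge (n / 2) (r * k) with h | h
    · rw [h1 _ (le_of_lt h), satPlay, if_pos h] at hcol
      simp [cnfF1_node] at hcol
    · rw [h2 _ h] at hcol
      simp [cnfF1_paraFalse] at hcol
  · rcases lt_or_ge (n / 2) (r * k) with h | h
    · rw [h1 _ (le_of_lt h), satPlay, if_pos h, ← hpre _ h, cnfE1_node,
        if_pos (show (satA hk v (n / 2)).1 = ⟨n / 2 % k, Nat.mod_lt _ hk⟩ from rfl)] at hcol
      simp [cnfF2_node] at hcol
    · rw [h2 _ h, cnfE1_para] at hcol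
      simp [cnfF2_paraFalse] at hcol

/-- **Theorem 4.** A CNF formula `ψ = C₁ ∧ … ∧ C_r` over the
variables `x₁,…,x_k` is satisfiable if and only if the reachability game `G_ψ` is
not `k`-transducer live. -/
theorem cnf_sat_iff_not_live {k r : ℕ} (hk : 0 < k) (hr : 0 < r)
    (C : Fin r → CClause k) :
    CNFSat C ↔ ¬ (cnfGame hk hr C).kLiveReach k := by
  constructor
  · exact not_live_of_sat hk hr C
  · intro hnl
    by_contra hns
    exact hnl (live_of_unsat hk hr C hns)
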